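/- Define T(n,t) as the exact Sorting formula. For t = 1, T(n,1) satisfies (1/2)·(n! − 1) ≤ T(n,1) ≤ (e − 1)·(n! − 1); in particular T(n,1) = Θ(n!). -/

import Mathlib

open Filter Asymptotics

/-- Exact expected optimization time of BACO on Sorting with `n` keys and pheromone ratio `t`. -/
noncomputable def Tsort (n : ℕ) (t : ℝ) : ℝ :=
  (1 / (t * (Nat.factorial n : ℝ))) *
    ∑ i ∈ Finset.Icc 1 (n - 1),
      (i : ℝ) * (Nat.factorial i : ℝ) *
        ((∏ r ∈ Finset.Icc i (n - 1), (1 + (r : ℝ) * t)) +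
          ∑ k ∈ Finset.Icc 1 (i - 1),
            ((k : ℝ) / ((k : ℝ) + 1)) * ∏ r ∈ Finset.Icc k (n - 1), (1 + (r : ℝ) * t))

lemma prod_succ_icc (m : ℕ) : ∀ i : ℕ, i ≤ m + 1 →
    Nat.factorial i * ∏ r ∈ Finset.Icc i m, (r + 1) = Nat.factorial (m + 1) := by
  induction m with
  | zero =>
      intro i hi
      interval_cases i <;> simp [Nat.factorial]
  | succ m ih =>
      intro i hi
      rcases eq_or_lt_of_le hi with h | h
      · subst h
        simp [Nat.factorial]
      · have hi' : i ≤ m + 1 := Nat.lt_succ_iff.mp h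
        rw [Finset.prod_Icc_succ_top (by omega), ← mul_assoc, ih i hi']
        rw [Nat.factorial_succ (m + 1)]
        ring

lemma prod_succ_icc_real (m i : ℕ) (h : i ≤ m + 1) :
    ∏ r ∈ Finset.Icc i m, ((r : ℝ) + 1) =
      (Nat.factorial (m + 1) : ℝ) / (Nat.factorial i : ℝ) := by
  have := prod_succ_icc m i h
  have h2 : (Nat.factorial i : ℝ) * ∏ r ∈ Finset.Icc i m, ((r : ℝ) + 1)
      = (Nat.factorial (m + 1) : ℝ) := by
    exact_mod_cast congrArg (fun x : ℕ => (x : ℝ)) this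
  field_simp at h2 ⊢
  linarith [h2]

lemma sum_k_div (j : ℕ) :
    ∑ k ∈ Finset.Icc 1 j, (k : ℝ) / (Nat.factorial (k + 1) : ℝ)
      = 1 - 1 / (Nat.factorial (j + 1) : ℝ) := by
  induction j with
  | zero => simp
  | succ j ih =>
      rw [Finset.sum_Icc_succ_top (by omega), ih]
      have h1 : (Nat.factorial (j + 1) : ℝ) ≠ 0 := by positivity
      have h3 : (Nat.factorial (j + 1 + 1) : ℝ)
          = ((j : ℝ) + 2) * (Nat.factorial (j + 1) : ℝ) := by
        rw [Nat.factorial_succ (j + 1)]; push_cast; ring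
      have key : ((j : ℝ) + 1) / (Nat.factorial (j + 1 + 1) : ℝ)
          = 1 / (Nat.factorial (j + 1) : ℝ) - 1 / (Nat.factorial (j + 1 + 1) : ℝ) := by
        rw [h3]
        field_simp
        ring
      push_cast
      push_cast at key
      linarith [key]

lemma sum_i_fact (m : ℕ) :
    ∑ i ∈ Finset.Icc 1 m, (i : ℝ) * (Nat.factorial i : ℝ)
      = (Nat.factorial (m + 1) : ℝ) - 1 := by
  induction m with
  | zero => simp
  | succ m ih =>
      rw [Finset.sum_Icc_succ_top (by omega), ih]
      rw [Nat.factorial_succ (m + 1)]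
      push_cast
      ring

lemma tsort_eq (n : ℕ) : Tsort n 1 = (Nat.factorial n : ℝ) - 1 := by
  match n with
  | 0 => simp [Tsort]
  | 1 => simp [Tsort]
  | (m + 2) =>
    have hm : (m + 2) - 1 = m + 1 := by omega
    have key : ∀ i ∈ Finset.Icc 1 (m + 1),
        (i : ℝ) * (Nat.factorial i : ℝ) *
          ((∏ r ∈ Finset.Icc i (m + 1), (1 + (r : ℝ) * 1)) +
            ∑ k ∈ Finset.Icc 1 (i - 1),
              ((k : ℝ) / ((k : ℝ) + 1)) * ∏ r ∈ Finset.Icc k (m + 1), (1 + (r : ℝ) * 1))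
        = (Nat.factorial (m + 2) : ℝ) * ((i : ℝ) * (Nat.factorial i : ℝ)) := by
      intro i hi
      simp only [Finset.mem_Icc] at hi
      have hprod : ∀ a : ℕ, a ≤ m + 2 →
          ∏ r ∈ Finset.Icc a (m + 1), (1 + (r : ℝ) * 1)
            = (Nat.factorial (m + 2) : ℝ) / (Nat.factorial a : ℝ) := by
        intro a ha
        rw [← prod_succ_icc_real (m + 1) a ha]
        apply Finset.prod_congr rfl
        intro r _; ring
      rw [hprod i (by omega)]
      have hterm : ∀ k ∈ Finset.Icc 1 (i - 1),
          ((k : ℝ) / ((k : ℝ) + 1)) * ∏ r ∈ Finset.Icc k (m + 1), (1 + (r : ℝ) * 1)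
            = (Nat.factorial (m + 2) : ℝ) * ((k : ℝ) / (Nat.factorial (k + 1) : ℝ)) := by
        intro k hk
        simp only [Finset.mem_Icc] at hk
        rw [hprod k (by omega)]
        have hk1 : (Nat.factorial (k + 1) : ℝ) = ((k : ℝ) + 1) * (Nat.factorial k : ℝ) := by
          rw [Nat.factorial_succ]; push_cast; ring
        have h1 : (Nat.factorial k : ℝ) ≠ 0 := by positivity
        have h2 : (k : ℝ) + 1 ≠ 0 := by positivity
        rw [hk1]
        field_simp
      rw [Finset.sum_congr rfl hterm, ← Finset.mul_sum]
      obtain ⟨hi1, hi2⟩ := hi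
      obtain ⟨j, rfl⟩ : ∃ j, i = j + 1 := ⟨i - 1, by omega⟩
      have hji : (j + 1) - 1 = j := by omega
      rw [hji, sum_k_div j]
      have h1 : (Nat.factorial (j + 1) : ℝ) ≠ 0 := by positivity
      field_simp
      ring
    have hsum : ∑ i ∈ Finset.Icc 1 (m + 1),
        (i : ℝ) * (Nat.factorial i : ℝ) *
          ((∏ r ∈ Finset.Icc i (m + 1), (1 + (r : ℝ) * 1)) +
            ∑ k ∈ Finset.Icc 1 (i - 1),
              ((k : ℝ) / ((k : ℝ) + 1)) * ∏ r ∈ Finset.Icc k (m + 1), (1 + (r : ℝ) * 1))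
        = (Nat.factorial (m + 2) : ℝ) * ((Nat.factorial (m + 2) : ℝ) - 1) := by
      rw [Finset.sum_congr rfl key, ← Finset.mul_sum, sum_i_fact (m + 1)]
    have hfac : (Nat.factorial (m + 2) : ℝ) ≠ 0 := by positivity
    unfold Tsort
    rw [hm, hsum]
    field_simp

theorem sorting_time_blind_search :
    (∀ n : ℕ, (1 / 2) * ((Nat.factorial n : ℝ) - 1) ≤ Tsort n 1 ∧
        Tsort n 1 ≤ (Real.exp 1 - 1) * ((Nat.factorial n : ℝ) - 1)) ∧
      (fun n : ℕ => Tsort n 1) =Θ[atTop] fun n : ℕ => (Nat.factorial n : ℝ) := by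
  constructor
  · intro n
    rw [tsort_eq n]
    have h1 : (1 : ℝ) ≤ (Nat.factorial n : ℝ) := by
      exact_mod_cast Nat.one_le_iff_ne_zero.mpr (Nat.factorial_ne_zero n)
    have he : (2 : ℝ) ≤ Real.exp 1 := by
      have := Real.add_one_le_exp (1 : ℝ)
      linarith
    constructor
    · nlinarith
    · nlinarith
  · constructor
    · apply IsBigO.of_bound 1
      filter_upwards [eventually_ge_atTop 1] with n hn
      rw [tsort_eq n]
      have h1 : (1 : ℝ) ≤ (Nat.factorial n : ℝ) := by
        exact_mod_cast Nat.one_le_iff_ne_zero.mpr (Nat.factorial_ne_zero n)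
      rw [Real.norm_eq_abs, Real.norm_eq_abs, abs_of_nonneg (by linarith), abs_of_nonneg (by linarith)]
      linarith
    · apply IsBigO.of_bound 2
      filter_upwards [eventually_ge_atTop 2] with n hn
      rw [tsort_eq n]
      have h1 : (2 : ℝ) ≤ (Nat.factorial n : ℝ) := by
        exact_mod_cast Nat.le_of_lt_succ (Nat.lt_succ_of_le (le_trans hn (Nat.self_le_factorial n)))
      rw [Real.norm_eq_abs, Real.norm_eq_abs, abs_of_nonneg (by linarith), abs_of_nonneg (by linarith)]
      linarith
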